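/- One has ∫₁^∞ 1/(((ln(t-1))² + π²)·t) dt = 1/2; equivalently, ∫₀¹ 1/(s·((ln(1/s - 1))² + π²)) ds = 1/2. -/

import Mathlib

open MeasureTheory Real

noncomputable def F (u : ℝ) : ℝ := Real.exp u / ((u ^ 2 + π ^ 2) * (1 + Real.exp u))

lemma denom_pos (u : ℝ) : 0 < u ^ 2 + π ^ 2 := by positivity

lemma g_integrable : Integrable (fun u : ℝ => (u ^ 2 + π ^ 2)⁻¹) := by
  have h : (fun u : ℝ => (u ^ 2 + π ^ 2)⁻¹)
      = fun u : ℝ => (π ^ 2)⁻¹ * (1 + (u / π) ^ 2)⁻¹ := by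
    funext u
    rw [← mul_inv]
    congr 1
    field_simp
    ring
  rw [h]
  exact ((integrable_inv_one_add_sq).comp_div pi_ne_zero).const_mul _

lemma g_integral : (∫ u : ℝ, (u ^ 2 + π ^ 2)⁻¹) = 1 := by
  have h : (fun u : ℝ => (u ^ 2 + π ^ 2)⁻¹)
      = fun u : ℝ => (π ^ 2)⁻¹ * (1 + (u / π) ^ 2)⁻¹ := by
    funext u
    rw [← mul_inv]
    congr 1
    field_simp
    ring
  rw [h, integral_const_mul, MeasureTheory.Measure.integral_comp_div (fun x : ℝ => (1 + x ^ 2)⁻¹) π,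
    integral_univ_inv_one_add_sq, abs_of_pos pi_pos, smul_eq_mul]
  field_simp

lemma F_le (u : ℝ) : ‖F u‖ ≤ (u ^ 2 + π ^ 2)⁻¹ := by
  have h1 : (0:ℝ) < 1 + Real.exp u := by positivity
  have h2 := denom_pos u
  have key : (u ^ 2 + π ^ 2)⁻¹ * ((u ^ 2 + π ^ 2) * (1 + Real.exp u)) = 1 + Real.exp u := by
    field_simp
  rw [Real.norm_eq_abs, F, abs_of_pos (by positivity), div_le_iff₀ (by positivity), key]
  linarith [Real.exp_pos u]

lemma F_meas : Measurable F := by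
  apply Measurable.div (by measurability) (by measurability)

lemma F_integrable : Integrable F :=
  g_integrable.mono' F_meas.aestronglyMeasurable (Filter.Eventually.of_forall F_le)

theorem F_integral : (∫ u : ℝ, F u) = 1 / 2 := by
  have hneg : (∫ u : ℝ, F (-u)) = ∫ u : ℝ, F u := integral_neg_eq_self F volume
  have hsum : ∀ u : ℝ, F u + F (-u) = (u ^ 2 + π ^ 2)⁻¹ := by
    intro u
    have h2 := (denom_pos u).ne'
    have he := (Real.exp_pos u).ne'
    simp only [F, Real.exp_neg, neg_pow, even_two.neg_pow]
    rw [div_add_div _ _ (by positivity) (by positivity)]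
    rw [eq_comm, inv_eq_iff_eq_inv, eq_comm, inv_eq_iff_eq_inv]
    field_simp
    ring
  have hFneg : Integrable (fun u => F (-u)) := by
    refine g_integrable.mono' (F_meas.comp measurable_neg).aestronglyMeasurable
      (Filter.Eventually.of_forall fun u => ?_)
    simpa using F_le (-u)
  have := integral_add F_integrable hFneg
  rw [hneg] at this
  have h2 : (∫ u : ℝ, F u) + (∫ u : ℝ, F u) = 1 := by
    rw [← this]
    rw [show (fun a => F a + F (-a)) = fun u : ℝ => (u ^ 2 + π ^ 2)⁻¹ from funext hsum]
    exact g_integral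
  linarith

lemma range1 : Set.range (fun u : ℝ => 1 + Real.exp u) = Set.Ioi 1 := by
  ext x
  simp only [Set.mem_range, Set.mem_Ioi]
  constructor
  · rintro ⟨u, rfl⟩; linarith [Real.exp_pos u]
  · intro hx
    exact ⟨Real.log (x - 1), by rw [Real.exp_log (by linarith)]; ring⟩

lemma first_int : (∫ t in Set.Ioi (1 : ℝ), 1 / (((Real.log (t - 1)) ^ 2 + π ^ 2) * t))
    = ∫ u : ℝ, F u := by
  have h := integral_image_eq_integral_abs_deriv_smul (s := Set.univ)
    (f := fun u : ℝ => 1 + Real.exp u) (f' := fun u : ℝ => Real.exp u)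
    MeasurableSet.univ
    (fun x _ => ((Real.hasDerivAt_exp x).const_add 1).hasDerivWithinAt)
    (fun a _ b _ hab => Real.exp_injective (by linarith [add_right_injective (1:ℝ) hab]))
    (fun t => 1 / (((Real.log (t - 1)) ^ 2 + π ^ 2) * t))
  rw [Set.image_univ, range1, Measure.restrict_univ] at h
  rw [h]
  congr 1
  funext u
  have he := Real.exp_pos u
  rw [smul_eq_mul, abs_of_pos he]
  simp only [add_sub_cancel_left, Real.log_exp, F]
  field_simp

lemma range2 : Set.range (fun u : ℝ => (1 + Real.exp u)⁻¹) = Set.Ioo 0 1 := by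
  ext x
  simp only [Set.mem_range, Set.mem_Ioo]
  constructor
  · rintro ⟨u, rfl⟩
    have he := Real.exp_pos u
    constructor
    · positivity
    · rw [inv_lt_one_iff₀]; right; linarith
  · rintro ⟨h0, h1⟩
    refine ⟨Real.log (1 / x - 1), ?_⟩
    rw [Real.exp_log (by rw [lt_sub_iff_add_lt, zero_add, lt_div_iff₀ h0, one_mul]; exact h1)]
    field_simp
    ring

lemma second_int : (∫ s in Set.Ioo (0 : ℝ) 1, 1 / (s * ((Real.log (1 / s - 1)) ^ 2 + π ^ 2)))
    = ∫ u : ℝ, F u := by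
  have hne : ∀ u : ℝ, (1 + Real.exp u) ≠ 0 := fun u => by positivity
  have h := integral_image_eq_integral_abs_deriv_smul (s := Set.univ)
    (f := fun u : ℝ => (1 + Real.exp u)⁻¹)
    (f' := fun u : ℝ => -Real.exp u / (1 + Real.exp u) ^ 2)
    MeasurableSet.univ
    (fun x _ => (((Real.hasDerivAt_exp x).const_add 1).inv (hne x)).hasDerivWithinAt)
    (fun a _ b _ hab => by
      have := inv_injective hab
      exact Real.exp_injective (by linarith [add_right_injective (1:ℝ) this]))
    (fun s => 1 / (s * ((Real.log (1 / s - 1)) ^ 2 + π ^ 2)))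
  rw [Set.image_univ, range2, Measure.restrict_univ] at h
  rw [h]
  congr 1
  funext u
  have he := Real.exp_pos u
  have h2 : (0:ℝ) < 1 + Real.exp u := by positivity
  rw [smul_eq_mul, abs_div, abs_neg, abs_of_pos he, abs_of_pos (by positivity)]
  have h3 : 1 / (1 + Real.exp u)⁻¹ - 1 = Real.exp u := by field_simp; ring
  rw [h3, Real.log_exp, F]
  field_simp

/-- `∫₁^∞ 1/(((ln(t-1))² + π²)·t) dt = 1/2`; equivalently,
`∫₀¹ 1/(s·((ln(1/s - 1))² + π²)) ds = 1/2`. -/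
theorem stmt_17 :
    (∫ t in Set.Ioi (1 : ℝ), 1 / (((Real.log (t - 1)) ^ 2 + Real.pi ^ 2) * t)) = 1 / 2 ∧
    (∫ s in Set.Ioo (0 : ℝ) 1, 1 / (s * ((Real.log (1 / s - 1)) ^ 2 + Real.pi ^ 2))) = 1 / 2 := by
  exact ⟨first_int.trans F_integral, second_int.trans F_integral⟩
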